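/- Fix p₁, p₂ > 0 and σ₁, σ₂ > 0. Then lim_{δ → +∞} ∫_ℝ t² φ_{σ₁}(t)² / ( p₁ φ_{σ₁}(t) + p₂ φ_{σ₂}(t − δ) ) dt = σ₁²/p₁, and the same limit holds as δ → −∞. (Thus the diagonal Fisher-information entry for the mean of one Gaussian component tends to the positive constant σ₁²/p₁ as the other component's mean moves to infinity; this is why the Jeffreys prior on the means does not decay along these directions.) -/

import Mathlib

open MeasureTheory Filter

noncomputable section

/-- Density of a centered Gaussian with standard deviation `σ`. -/
def gaussPdf (σ x : ℝ) : ℝ :=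
  (Real.sqrt (2 * Real.pi * σ ^ 2))⁻¹ * Real.exp (-(x ^ 2) / (2 * σ ^ 2))

open Real in
lemma gaussPdf_pos {σ : ℝ} (hσ : 0 < σ) (x : ℝ) : 0 < gaussPdf σ x := by
  unfold gaussPdf
  have : 0 < Real.sqrt (2 * Real.pi * σ ^ 2) := Real.sqrt_pos.2 (by positivity)
  positivity

lemma continuous_gaussPdf (σ : ℝ) : Continuous (gaussPdf σ) := by
  unfold gaussPdf
  fun_prop

open Real in
lemma gaussPdf_eq (σ : ℝ) (x : ℝ) :
    gaussPdf σ x = (Real.sqrt (2 * Real.pi * σ ^ 2))⁻¹ * Real.exp (-(2 * σ ^ 2)⁻¹ * x ^ 2) := by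
  unfold gaussPdf
  ring_nf

open Real in
lemma integrable_sq_mul_exp {b : ℝ} (hb : 0 < b) :
    Integrable fun x : ℝ => x ^ 2 * Real.exp (-b * x ^ 2) := by
  have h := integrable_rpow_mul_exp_neg_mul_sq hb (s := 2) (by norm_num)
  have e : ∀ x : ℝ, x ^ (2 : ℝ) = x ^ 2 := fun x => by
    rw [show (2 : ℝ) = ((2 : ℕ) : ℝ) by norm_num, Real.rpow_natCast]
  simpa only [e] using h

open Real in
lemma integral_sq_mul_exp {b : ℝ} (hb : 0 < b) :
    ∫ x : ℝ, x ^ 2 * Real.exp (-b * x ^ 2) = Real.sqrt (π / b) / (2 * b) := by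
  set f' : ℝ → ℝ := fun x => Real.exp (-b * x ^ 2) - 2 * b * (x ^ 2 * Real.exp (-b * x ^ 2))
  have hderiv : ∀ x : ℝ, HasDerivAt (fun x : ℝ => x * Real.exp (-b * x ^ 2)) (f' x) x := by
    intro x
    have h1 : HasDerivAt (fun x : ℝ => -b * x ^ 2) (-b * (2 * x)) x := by
      simpa using ((hasDerivAt_pow 2 x).const_mul (-b))
    have h3 := (hasDerivAt_id x).mul h1.exp
    refine h3.congr_deriv ?_
    simp [f']
    ring
  have hf' : Integrable f' :=
    (integrable_exp_neg_mul_sq hb).sub ((integrable_sq_mul_exp hb).const_mul (2 * b))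
  have hz := integral_eq_zero_of_hasDerivAt_of_integrable hderiv hf'
      (integrable_mul_exp_neg_mul_sq hb)
  rw [integral_sub (integrable_exp_neg_mul_sq hb)
      ((integrable_sq_mul_exp hb).const_mul (2 * b)), integral_const_mul,
      integral_gaussian, sub_eq_zero] at hz
  field_simp at hz ⊢
  linarith [hz]

open Real in
lemma integrable_sq_mul_gaussPdf {σ : ℝ} (hσ : 0 < σ) :
    Integrable fun x : ℝ => x ^ 2 * gaussPdf σ x := by
  have hb : (0 : ℝ) < (2 * σ ^ 2)⁻¹ := by positivity
  have h := (integrable_sq_mul_exp hb).const_mul (Real.sqrt (2 * Real.pi * σ ^ 2))⁻¹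
  refine h.congr (Eventually.of_forall fun x => ?_)
  simp only [gaussPdf_eq]
  ring

open Real in
lemma integral_sq_mul_gaussPdf {σ : ℝ} (hσ : 0 < σ) :
    ∫ x : ℝ, x ^ 2 * gaussPdf σ x = σ ^ 2 := by
  have hb : (0 : ℝ) < (2 * σ ^ 2)⁻¹ := by positivity
  have h : ∫ x : ℝ, x ^ 2 * gaussPdf σ x
      = (Real.sqrt (2 * Real.pi * σ ^ 2))⁻¹ *
        ∫ x : ℝ, x ^ 2 * Real.exp (-(2 * σ ^ 2)⁻¹ * x ^ 2) := by
    rw [← integral_const_mul]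
    congr 1 with x
    rw [gaussPdf_eq]; ring
  rw [h, integral_sq_mul_exp hb]
  have h1 : π / (2 * σ ^ 2)⁻¹ = 2 * π * σ ^ 2 := by field_simp
  rw [h1]
  have hs : 0 < Real.sqrt (2 * Real.pi * σ ^ 2) := Real.sqrt_pos.2 (by positivity)
  field_simp

open Real in
lemma gaussPdf_tendsto_zero {σ : ℝ} (hσ : 0 < σ) {l : Filter ℝ} {u : ℝ → ℝ}
    (hu : Tendsto (fun δ => (u δ) ^ 2) l atTop) :
    Tendsto (fun δ => gaussPdf σ (u δ)) l (nhds 0) := by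
  have h1 : Tendsto (fun y : ℝ => -(y / (2 * σ ^ 2))) atTop atBot :=
    tendsto_neg_atTop_atBot.comp (tendsto_id.atTop_div_const (by positivity))
  have h2 : Tendsto (fun δ => Real.exp (-((u δ) ^ 2 / (2 * σ ^ 2)))) l (nhds 0) :=
    (Real.tendsto_exp_atBot.comp h1).comp hu
  have h3 : Tendsto (fun δ => (Real.sqrt (2 * Real.pi * σ ^ 2))⁻¹ *
      Real.exp (-((u δ) ^ 2 / (2 * σ ^ 2)))) l (nhds 0) := by
    simpa using h2.const_mul (Real.sqrt (2 * Real.pi * σ ^ 2))⁻¹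
  refine h3.congr fun δ => ?_
  unfold gaussPdf
  rw [neg_div]

open Real in
lemma meanFisher_entry_limit_aux (p₁ p₂ σ₁ σ₂ : ℝ)
    (hp₁ : 0 < p₁) (hp₂ : 0 < p₂) (hσ₁ : 0 < σ₁) (hσ₂ : 0 < σ₂)
    (l : Filter ℝ) [l.IsCountablyGenerated]
    (hl : ∀ t : ℝ, Tendsto (fun δ : ℝ => (t - δ) ^ 2) l atTop) :
    Tendsto (fun δ : ℝ => ∫ t : ℝ,
        t ^ 2 * gaussPdf σ₁ t ^ 2 / (p₁ * gaussPdf σ₁ t + p₂ * gaussPdf σ₂ (t - δ)))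
      l (nhds (σ₁ ^ 2 / p₁)) := by
  have hg₁ := fun x => gaussPdf_pos hσ₁ x
  have hg₂ := fun x => gaussPdf_pos hσ₂ x
  have hden : ∀ δ t : ℝ, 0 < p₁ * gaussPdf σ₁ t + p₂ * gaussPdf σ₂ (t - δ) := fun δ t => by
    have := hg₁ t; have := hg₂ (t - δ); positivity
  have key := tendsto_integral_filter_of_dominated_convergence
      (μ := (volume : Measure ℝ)) (l := l)
      (F := fun δ t => t ^ 2 * gaussPdf σ₁ t ^ 2 /
        (p₁ * gaussPdf σ₁ t + p₂ * gaussPdf σ₂ (t - δ)))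
      (f := fun t => t ^ 2 * gaussPdf σ₁ t / p₁)
      (bound := fun t => t ^ 2 * gaussPdf σ₁ t / p₁)
      ?_ ?_ ?_ ?_
  · have : ∫ t : ℝ, t ^ 2 * gaussPdf σ₁ t / p₁ = σ₁ ^ 2 / p₁ := by
      rw [integral_div, integral_sq_mul_gaussPdf hσ₁]
    rwa [this] at key
  · refine Eventually.of_forall fun δ => Continuous.aestronglyMeasurable ?_
    apply Continuous.div
    · exact ((continuous_pow 2).mul ((continuous_gaussPdf σ₁).pow 2))
    · exact (continuous_const.mul (continuous_gaussPdf σ₁)).add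
        (continuous_const.mul ((continuous_gaussPdf σ₂).comp (continuous_id.sub continuous_const)))
    · exact fun t => (hden δ t).ne'
  · refine Eventually.of_forall fun δ => Eventually.of_forall fun t => ?_
    have hnum : 0 ≤ t ^ 2 * gaussPdf σ₁ t ^ 2 := by positivity
    rw [Real.norm_eq_abs, abs_of_nonneg (div_nonneg hnum (hden δ t).le)]
    have h1 : t ^ 2 * gaussPdf σ₁ t ^ 2 / (p₁ * gaussPdf σ₁ t + p₂ * gaussPdf σ₂ (t - δ))
        ≤ t ^ 2 * gaussPdf σ₁ t ^ 2 / (p₁ * gaussPdf σ₁ t) := by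
      gcongr
      · have := hg₁ t; positivity
      · have := hg₂ (t - δ); nlinarith [hg₂ (t - δ)]
    have h2 : t ^ 2 * gaussPdf σ₁ t ^ 2 / (p₁ * gaussPdf σ₁ t)
        = t ^ 2 * gaussPdf σ₁ t / p₁ := by
      have := (hg₁ t).ne'
      field_simp
    rw [h2] at h1
    exact h1
  · exact (integrable_sq_mul_gaussPdf hσ₁).div_const p₁
  · refine Eventually.of_forall fun t => ?_
    have hlim2 : Tendsto (fun δ : ℝ => gaussPdf σ₂ (t - δ)) l (nhds 0) :=
      gaussPdf_tendsto_zero hσ₂ (hl t)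
    have hd : Tendsto (fun δ : ℝ => p₁ * gaussPdf σ₁ t + p₂ * gaussPdf σ₂ (t - δ)) l
        (nhds (p₁ * gaussPdf σ₁ t)) := by
      have := (hlim2.const_mul p₂)
      simpa using tendsto_const_nhds.add this
    have := (tendsto_const_nhds (x := t ^ 2 * gaussPdf σ₁ t ^ 2)).div hd
      (by have := hg₁ t; positivity)
    convert this using 2
    · rfl
    have := (hg₁ t).ne'
    field_simp

/-- for fixed `p₁, p₂ > 0` and `σ₁, σ₂ > 0`,
`∫ t² φ_{σ₁}(t)² / (p₁ φ_{σ₁}(t) + p₂ φ_{σ₂}(t - δ)) dt → σ₁²/p₁`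
as `δ → +∞`, and the same limit holds as `δ → -∞`.  (The diagonal Fisher-information
entry for the mean of one Gaussian component tends to a positive constant as the
other component's mean moves to infinity.) -/
theorem meanFisher_entry_limit (p₁ p₂ σ₁ σ₂ : ℝ)
    (hp₁ : 0 < p₁) (hp₂ : 0 < p₂) (hσ₁ : 0 < σ₁) (hσ₂ : 0 < σ₂) :
    Tendsto (fun δ : ℝ => ∫ t : ℝ,
        t ^ 2 * gaussPdf σ₁ t ^ 2 / (p₁ * gaussPdf σ₁ t + p₂ * gaussPdf σ₂ (t - δ)))
      atTop (nhds (σ₁ ^ 2 / p₁)) ∧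
    Tendsto (fun δ : ℝ => ∫ t : ℝ,
        t ^ 2 * gaussPdf σ₁ t ^ 2 / (p₁ * gaussPdf σ₁ t + p₂ * gaussPdf σ₂ (t - δ)))
      atBot (nhds (σ₁ ^ 2 / p₁)) := by
  constructor
  · refine meanFisher_entry_limit_aux p₁ p₂ σ₁ σ₂ hp₁ hp₂ hσ₁ hσ₂ atTop fun t => ?_
    have h : Tendsto (fun δ : ℝ => t - δ) atTop atBot := by
      simpa [sub_eq_add_neg] using tendsto_atBot_add_const_left atTop t tendsto_neg_atTop_atBot
    have h2 := (tendsto_pow_atTop (n := 2) two_ne_zero).comp (tendsto_abs_atBot_atTop.comp h)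
    refine h2.congr fun δ => ?_
    simp [sq_abs]
  · refine meanFisher_entry_limit_aux p₁ p₂ σ₁ σ₂ hp₁ hp₂ hσ₁ hσ₂ atBot fun t => ?_
    have h : Tendsto (fun δ : ℝ => t - δ) atBot atTop := by
      simpa [sub_eq_add_neg] using tendsto_atTop_add_const_left atBot t tendsto_neg_atBot_atTop
    exact (tendsto_pow_atTop (n := 2) two_ne_zero).comp h
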